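/- Let ξ_{i−1} < ξ_i < ξ_{i+1}, a_i > 0, ε > 0, h_i = ξ_i − ξ_{i−1}, h_{i+1} = ξ_{i+1} − ξ_i, ħ_i = (h_i + h_{i+1})/2, and let ψ_i be the exponential basis function. Then for every v ∈ C²([ξ_{i−1}, ξ_{i+1}]), with v_j = v(ξ_j): ħ_i⁻¹ ∫_{ξ_{i−1}}^{ξ_{i+1}} (ε v''(ξ) + a_i v'(ξ)) ψ_i(ξ) dξ = ε v_{ξ̄ξ,i} + a_i (χ_i^{(1)} v_{ξ̄,i} + χ_i^{(2)} v_{ξ,i}), where v_{ξ̄,i} = (v_i − v_{i−1})/h_i, v_{ξ,i} = (v_{i+1} − v_i)/h_{i+1}, v_{ξ̄ξ,i} = (v_{ξ,i} − v_{ξ̄,i})/ħ_i, χ_i^{(1)} = ħ_i⁻¹[ε/a_i − h_i/(e^{a_i h_i/ε} − 1)], and χ_i^{(2)} = ħ_i⁻¹[h_{i+1}/(1 − e^{−a_i h_{i+1}/ε}) − ε/a_i]. -/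

import Mathlib

/-- The exponential basis function `ψ_i` on `[ξ_{i−1}, ξ_{i+1}]`. -/
noncomputable def psiFun (ε ai ξim ξi ξip : ℝ) : ℝ → ℝ := fun ξ =>
  if ξ ≤ ξi then
    (Real.exp (ai * (ξ - ξim) / ε) - 1) / (Real.exp (ai * (ξi - ξim) / ε) - 1)
  else
    (1 - Real.exp (-(ai * (ξip - ξ)) / ε)) / (1 - Real.exp (-(ai * (ξip - ξi)) / ε))

set_option maxHeartbeats 1000000 in
/-- the exact local integral identity
`hbar_i⁻¹ ∫ (ε v'' + a_i v') ψ_i = ε v_{ξ̄ξ,i} + a_i (χ_i⁽¹⁾ v_{ξ̄,i} + χ_i⁽²⁾ v_{ξ,i})`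
for every `v ∈ C²([ξ_{i−1}, ξ_{i+1}])`. -/
theorem local_integral_identity
    (ε ai ξim ξi ξip hi hip hbar χ1 χ2 : ℝ)
    (hlt1 : ξim < ξi) (hlt2 : ξi < ξip) (hai : 0 < ai) (hε : 0 < ε)
    (hhi : hi = ξi - ξim) (hhip : hip = ξip - ξi) (hhbar : hbar = (hi + hip) / 2)
    (hχ1 : χ1 = hbar⁻¹ * (ε / ai - hi / (Real.exp (ai * hi / ε) - 1)))
    (hχ2 : χ2 = hbar⁻¹ * (hip / (1 - Real.exp (-(ai * hip) / ε)) - ε / ai))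
    (v v' v'' : ℝ → ℝ)
    (hv1 : ∀ ξ ∈ Set.Icc ξim ξip, HasDerivWithinAt v (v' ξ) (Set.Icc ξim ξip) ξ)
    (hv2 : ∀ ξ ∈ Set.Icc ξim ξip, HasDerivWithinAt v' (v'' ξ) (Set.Icc ξim ξip) ξ)
    (hv2c : ContinuousOn v'' (Set.Icc ξim ξip)) :
    hbar⁻¹ * ∫ ξ in ξim..ξip, (ε * v'' ξ + ai * v' ξ) * psiFun ε ai ξim ξi ξip ξ
      = ε * ((((v ξip - v ξi) / hip) - ((v ξi - v ξim) / hi)) / hbar)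
        + ai * (χ1 * ((v ξi - v ξim) / hi) + χ2 * ((v ξip - v ξi) / hip)) := by
  subst hhi hhip hhbar hχ1 hχ2
  have hεne : ε ≠ 0 := hε.ne'
  have haine : ai ≠ 0 := hai.ne'
  set D1 : ℝ := Real.exp (ai * (ξi - ξim) / ε) - 1 with hD1def
  set D2 : ℝ := 1 - Real.exp (-(ai * (ξip - ξi)) / ε) with hD2def
  have hp1 : (0:ℝ) < ξi - ξim := sub_pos.mpr hlt1
  have hp2 : (0:ℝ) < ξip - ξi := sub_pos.mpr hlt2
  have hD1 : 0 < D1 := by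
    have h : (0:ℝ) < ai * (ξi - ξim) / ε := by positivity
    simpa [hD1def, sub_pos] using Real.one_lt_exp_iff.mpr h
  have hD2 : 0 < D2 := by
    have h0 : -(ai * (ξip - ξi)) / ε < 0 := by
      have h : (0:ℝ) < ai * (ξip - ξi) / ε := by positivity
      rw [neg_div]; linarith
    simpa [hD2def, sub_pos] using Real.exp_lt_one_iff.mpr h0
  -- continuity of v and v'
  have hvc : ContinuousOn v (Set.Icc ξim ξip) := fun x hx => (hv1 x hx).continuousWithinAt
  have hv'c : ContinuousOn v' (Set.Icc ξim ξip) := fun x hx => (hv2 x hx).continuousWithinAt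
  -- the two smooth branches
  set ψL : ℝ → ℝ := fun ξ => (Real.exp (ai * (ξ - ξim) / ε) - 1) / D1 with hψLdef
  set ψR : ℝ → ℝ := fun ξ => (1 - Real.exp (-(ai * (ξip - ξ)) / ε)) / D2 with hψRdef
  have hexpL : ∀ x : ℝ, HasDerivAt (fun ξ => Real.exp (ai * (ξ - ξim) / ε))
      (ai / ε * Real.exp (ai * (x - ξim) / ε)) x := by
    intro x
    have h1 : HasDerivAt (fun ξ : ℝ => ai * (ξ - ξim) / ε) (ai / ε) x := by
      simpa using (((hasDerivAt_id x).sub_const ξim).const_mul ai).div_const ε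
    simpa [mul_comm, Function.comp_def] using (Real.hasDerivAt_exp (ai * (x - ξim) / ε)).comp x h1
  have hexpR : ∀ x : ℝ, HasDerivAt (fun ξ => Real.exp (-(ai * (ξip - ξ)) / ε))
      (ai / ε * Real.exp (-(ai * (ξip - x)) / ε)) x := by
    intro x
    have h1 : HasDerivAt (fun ξ : ℝ => -(ai * (ξip - ξ)) / ε) (ai / ε) x := by
      have : HasDerivAt (fun ξ : ℝ => ξip - ξ) (-1) x := by
        simpa using (hasDerivAt_id x).const_sub ξip
      have := ((this.const_mul ai).neg).div_const ε
      simpa using this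
    simpa [mul_comm, Function.comp_def] using (Real.hasDerivAt_exp (-(ai * (ξip - x)) / ε)).comp x h1
  have hψL : ∀ x : ℝ, HasDerivAt ψL (ai / ε * Real.exp (ai * (x - ξim) / ε) / D1) x := by
    intro x
    simpa [hψLdef] using ((hexpL x).sub_const 1).div_const D1
  have hψR : ∀ x : ℝ, HasDerivAt ψR (-(ai / ε * Real.exp (-(ai * (ξip - x)) / ε)) / D2) x := by
    intro x
    simpa [hψRdef] using ((hexpR x).const_sub 1).div_const D2
  have hψLc : Continuous ψL := by
    have : ∀ x, HasDerivAt ψL _ x := hψL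
    exact continuous_iff_continuousAt.mpr fun x => (hψL x).continuousAt
  have hψRc : Continuous ψR := continuous_iff_continuousAt.mpr fun x => (hψR x).continuousAt
  -- derivatives of v, v' at interior points
  have hmem : ∀ x ∈ Set.Ioo ξim ξip, Set.Icc ξim ξip ∈ nhds x := by
    intro x hx
    exact Icc_mem_nhds hx.1 hx.2
  have hvd : ∀ x ∈ Set.Ioo ξim ξip, HasDerivAt v (v' x) x := fun x hx =>
    (hv1 x (Set.Ioo_subset_Icc_self hx)).hasDerivAt (hmem x hx)
  have hv'd : ∀ x ∈ Set.Ioo ξim ξip, HasDerivAt v' (v'' x) x := fun x hx =>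
    (hv2 x (Set.Ioo_subset_Icc_self hx)).hasDerivAt (hmem x hx)
  -- antiderivatives
  set F : ℝ → ℝ := fun ξ => ε * v' ξ * ψL ξ - ai / D1 * v ξ with hFdef
  set G : ℝ → ℝ := fun ξ => ε * v' ξ * ψR ξ + ai / D2 * v ξ with hGdef
  have hF : ∀ x ∈ Set.Ioo ξim ξip,
      HasDerivAt F ((ε * v'' x + ai * v' x) * ψL x) x := by
    intro x hx
    have h := (((hv'd x hx).const_mul ε).mul (hψL x)).sub ((hvd x hx).const_mul (ai / D1))
    refine h.congr_deriv ?_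
    simp only [hψLdef]
    field_simp
    ring
  have hG : ∀ x ∈ Set.Ioo ξim ξip,
      HasDerivAt G ((ε * v'' x + ai * v' x) * ψR x) x := by
    intro x hx
    have h := (((hv'd x hx).const_mul ε).mul (hψR x)).add ((hvd x hx).const_mul (ai / D2))
    refine h.congr_deriv ?_
    simp only [hψRdef]
    field_simp
    ring
  -- integrand equality on each piece
  have hcongL : Set.EqOn (fun ξ => (ε * v'' ξ + ai * v' ξ) * psiFun ε ai ξim ξi ξip ξ)
      (fun ξ => (ε * v'' ξ + ai * v' ξ) * ψL ξ) (Set.uIcc ξim ξi) := by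
    intro x hx
    rw [Set.uIcc_of_le hlt1.le] at hx
    simp only [psiFun, hψLdef, if_pos hx.2]
    rfl
  have hcongR : Set.EqOn (fun ξ => (ε * v'' ξ + ai * v' ξ) * psiFun ε ai ξim ξi ξip ξ)
      (fun ξ => (ε * v'' ξ + ai * v' ξ) * ψR ξ) (Set.uIcc ξi ξip) := by
    intro x hx
    rw [Set.uIcc_of_le hlt2.le] at hx
    by_cases h : x ≤ ξi
    · have hxi : x = ξi := le_antisymm h hx.1
      subst hxi
      simp only [psiFun, hψLdef, hψRdef, if_pos le_refl]
      rw [div_self hD1.ne', div_self hD2.ne']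
      simp
    · simp only [psiFun, hψRdef, if_neg h]
      rfl
  -- integrability
  have hIccL : Set.Icc ξim ξi ⊆ Set.Icc ξim ξip := Set.Icc_subset_Icc_right hlt2.le
  have hIccR : Set.Icc ξi ξip ⊆ Set.Icc ξim ξip := Set.Icc_subset_Icc_left hlt1.le
  have hcontL : ContinuousOn (fun ξ => (ε * v'' ξ + ai * v' ξ) * ψL ξ) (Set.Icc ξim ξi) :=
    (((hv2c.mono hIccL).const_smul ε).add ((hv'c.mono hIccL).const_smul ai)).mul
      (hψLc.continuousOn)
  have hcontR : ContinuousOn (fun ξ => (ε * v'' ξ + ai * v' ξ) * ψR ξ) (Set.Icc ξi ξip) :=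
    (((hv2c.mono hIccR).const_smul ε).add ((hv'c.mono hIccR).const_smul ai)).mul
      (hψRc.continuousOn)
  have hintL : IntervalIntegrable (fun ξ => (ε * v'' ξ + ai * v' ξ) * ψL ξ)
      MeasureTheory.volume ξim ξi := by
    apply ContinuousOn.intervalIntegrable
    rwa [Set.uIcc_of_le hlt1.le]
  have hintR : IntervalIntegrable (fun ξ => (ε * v'' ξ + ai * v' ξ) * ψR ξ)
      MeasureTheory.volume ξi ξip := by
    apply ContinuousOn.intervalIntegrable
    rwa [Set.uIcc_of_le hlt2.le]
  -- FTC on each piece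
  have hFc : ContinuousOn F (Set.Icc ξim ξi) :=
    (((continuousOn_const.mul (hv'c.mono hIccL)).mul hψLc.continuousOn).sub
      (continuousOn_const.mul (hvc.mono hIccL)))
  have hGc : ContinuousOn G (Set.Icc ξi ξip) :=
    (((continuousOn_const.mul (hv'c.mono hIccR)).mul hψRc.continuousOn).add
      (continuousOn_const.mul (hvc.mono hIccR)))
  have hEL : (∫ ξ in ξim..ξi, (ε * v'' ξ + ai * v' ξ) * ψL ξ) = F ξi - F ξim := by
    apply intervalIntegral.integral_eq_sub_of_hasDeriv_right_of_le hlt1.le hFc _ hintL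
    intro x hx
    have hx' : x ∈ Set.Ioo ξim ξip := ⟨hx.1, lt_trans hx.2 hlt2⟩
    exact (hF x hx').hasDerivWithinAt
  have hER : (∫ ξ in ξi..ξip, (ε * v'' ξ + ai * v' ξ) * ψR ξ) = G ξip - G ξi := by
    apply intervalIntegral.integral_eq_sub_of_hasDeriv_right_of_le hlt2.le hGc _ hintR
    intro x hx
    have hx' : x ∈ Set.Ioo ξim ξip := ⟨lt_trans hlt1 hx.1, hx.2⟩
    exact (hG x hx').hasDerivWithinAt
  -- split the integral
  have hsplit : (∫ ξ in ξim..ξip, (ε * v'' ξ + ai * v' ξ) * psiFun ε ai ξim ξi ξip ξ)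
      = (F ξi - F ξim) + (G ξip - G ξi) := by
    rw [← intervalIntegral.integral_add_adjacent_intervals (a := ξim) (b := ξi) (c := ξip)
        (f := fun ξ => (ε * v'' ξ + ai * v' ξ) * psiFun ε ai ξim ξi ξip ξ)]
    · rw [intervalIntegral.integral_congr hcongL, intervalIntegral.integral_congr hcongR,
        hEL, hER]
    · apply ContinuousOn.intervalIntegrable
      rw [Set.uIcc_of_le hlt1.le]
      exact hcontL.congr (fun x hx => hcongL (by rw [Set.uIcc_of_le hlt1.le]; exact hx))
    · apply ContinuousOn.intervalIntegrable
      rw [Set.uIcc_of_le hlt2.le]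
      exact hcontR.congr (fun x hx => hcongR (by rw [Set.uIcc_of_le hlt2.le]; exact hx))
  -- evaluate F and G at the endpoints
  have hψLξim : ψL ξim = 0 := by simp [hψLdef]
  have hψLξi : ψL ξi = 1 := by simp only [hψLdef]; exact div_self hD1.ne'
  have hψRξi : ψR ξi = 1 := by simp only [hψRdef]; exact div_self hD2.ne'
  have hψRξip : ψR ξip = 0 := by simp [hψRdef]
  rw [hsplit]
  simp only [hFdef, hGdef, hψLξim, hψLξi, hψRξi, hψRξip]
  -- final algebra
  have hhi0 : ξi - ξim ≠ 0 := sub_ne_zero.mpr hlt1.ne'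
  have hhip0 : ξip - ξi ≠ 0 := sub_ne_zero.mpr hlt2.ne'
  have hbar0 : ((ξi - ξim) + (ξip - ξi)) / 2 ≠ 0 := by
    have : (0:ℝ) < ((ξi - ξim) + (ξip - ξi)) / 2 := by
      have := hlt1; have := hlt2; linarith
    exact this.ne'
  clear hEL hER hsplit hFc hGc hintL hintR hcontL hcontR hcongL hcongR hF hG
  clear hψLξim hψLξi hψRξi hψRξip hvd hv'd hmem hψLc hψRc hψL hψR hexpL hexpR
  clear hvc hv'c hv1 hv2 hv2c
  clear hFdef hGdef F G hψLdef hψRdef ψL ψR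
  clear_value D1 D2
  clear hD1def hD2def hIccL hIccR hp1 hp2
  set P := v ξim with hP
  set Q := v ξi with hQ
  set R := v ξip with hR
  set Z := v' ξi with hZ
  set Zm := v' ξim with hZm
  set Zp := v' ξip with hZp
  set x := ξi - ξim with hx
  set y := ξip - ξi with hy
  have hx0 : (0:ℝ) < x := by rw [hx]; linarith
  have hy0 : (0:ℝ) < y := by rw [hy]; linarith
  have hxy0 : x + y ≠ 0 := by positivity
  clear_value P Q R Z Zm Zp x y
  clear hP hQ hR hZ hZm hZp hx hy hhi0 hhip0 hbar0 hlt1 hlt2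
  have h2 : (2:ℝ) ≠ 0 := two_ne_zero
  field_simp
  ring
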